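/- arXiv:1606.04532 — 3 statements merged into one kernel-verified Lean document; each statement's English description precedes it below -/
import Mathlib

section
/- The pair (A, B) ∈ GL_k(F) × GL_{k+1}(F) stabilizes I_{k,k+1} under the simultaneous row/column action (i.e., applying B to the rows and A to the columns of both slices of I_{k,k+1} returns I_{k,k+1}) if and only if there exists c ∈ F^× such that A = c·I_k and B = c⁻¹·I_{k+1}. -/
open Matrix

section StabAux

variable {F : Type*} [Field F] {k : ℕ}

private lemma stab_sum_left (g : Fin (k+1) → F) (l : Fin (k+1)) :
    (∑ m : Fin (k+1), if (m : ℕ) = (l : ℕ) then g m else 0) = g l := by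
  rw [Finset.sum_eq_single l]
  · simp
  · intro m _ hm
    exact if_neg fun h => hm (Fin.ext h)
  · simp

private lemma stab_sum_right (g : Fin k → F) (t : ℕ) :
    (∑ m : Fin k, if t = (m : ℕ) then g m else 0) =
      if h : t < k then g ⟨t, h⟩ else 0 := by
  split
  · rename_i h
    rw [Finset.sum_eq_single ⟨t, h⟩]
    · simp
    · intro m _ hm
      exact if_neg fun he => hm (Fin.ext (by simp [← he]))
    · simp
  · rename_i h
    exact Finset.sum_eq_zero fun m _ => if_neg (fun he => h (lt_of_eq_of_lt he m.isLt))

private lemma stab_mulS0 (M : Matrix (Fin (k+1)) (Fin (k+1)) F) (i : Fin (k+1)) (l : Fin k) :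
    (M * (Matrix.of fun i j => if (i : ℕ) = (j : ℕ) then (1 : F) else 0 :
        Matrix (Fin (k+1)) (Fin k) F)) i l = M i l.castSucc := by
  rw [Matrix.mul_apply]
  have h : ∀ m : Fin (k+1), M i m * (if (m : ℕ) = (l : ℕ) then (1 : F) else 0) =
      if (m : ℕ) = ((l.castSucc : Fin (k+1)) : ℕ) then M i m else 0 := by
    intro m
    simp only [Fin.coe_castSucc]
    split <;> ring
  simp only [Matrix.of_apply]
  rw [Finset.sum_congr rfl fun m _ => h m, stab_sum_left (fun m => M i m) l.castSucc]

private lemma stab_mulS1 (M : Matrix (Fin (k+1)) (Fin (k+1)) F) (i : Fin (k+1)) (l : Fin k) :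
    (M * (Matrix.of fun i j => if (i : ℕ) = (j : ℕ) + 1 then (1 : F) else 0 :
        Matrix (Fin (k+1)) (Fin k) F)) i l = M i l.succ := by
  rw [Matrix.mul_apply]
  have h : ∀ m : Fin (k+1), M i m * (if (m : ℕ) = (l : ℕ) + 1 then (1 : F) else 0) =
      if (m : ℕ) = ((l.succ : Fin (k+1)) : ℕ) then M i m else 0 := by
    intro m
    simp only [Fin.val_succ]
    split <;> ring
  simp only [Matrix.of_apply]
  rw [Finset.sum_congr rfl fun m _ => h m, stab_sum_left (fun m => M i m) l.succ]

private lemma stab_S0mul (C : Matrix (Fin k) (Fin k) F) (i : Fin (k+1)) (l : Fin k) :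
    ((Matrix.of fun i j => if (i : ℕ) = (j : ℕ) then (1 : F) else 0 :
        Matrix (Fin (k+1)) (Fin k) F) * C) i l
      = if h : (i : ℕ) < k then C ⟨i, h⟩ l else 0 := by
  rw [Matrix.mul_apply]
  have h : ∀ m : Fin k, (if (i : ℕ) = (m : ℕ) then (1 : F) else 0) * C m l =
      if (i : ℕ) = (m : ℕ) then C m l else 0 := by
    intro m
    split <;> ring
  simp only [Matrix.of_apply]
  rw [Finset.sum_congr rfl fun m _ => h m, stab_sum_right (fun m => C m l) i]

private lemma stab_S1mul (C : Matrix (Fin k) (Fin k) F) (i : Fin (k+1)) (l : Fin k) :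
    ((Matrix.of fun i j => if (i : ℕ) = (j : ℕ) + 1 then (1 : F) else 0 :
        Matrix (Fin (k+1)) (Fin k) F) * C) i l
      = if h : (i : ℕ) - 1 < k ∧ 0 < (i : ℕ) then C ⟨(i : ℕ) - 1, h.1⟩ l else 0 := by
  rw [Matrix.mul_apply]
  have h : ∀ m : Fin k, (if (i : ℕ) = (m : ℕ) + 1 then (1 : F) else 0) * C m l =
      if (i : ℕ) = (m : ℕ) + 1 then C m l else 0 := by
    intro m
    split <;> ring
  simp only [Matrix.of_apply]
  rw [Finset.sum_congr rfl fun m _ => h m]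
  split
  · rename_i h'
    rw [Finset.sum_eq_single (⟨(i : ℕ) - 1, h'.1⟩ : Fin k)]
    · rw [if_pos (by simp; omega)]
    · intro m _ hm
      refine if_neg fun he => hm (Fin.ext ?_)
      simp only
      omega
    · simp
  · rename_i h'
    exact Finset.sum_eq_zero fun m _ => if_neg fun he => h' ⟨by omega, by omega⟩

private lemma stab_toeplitz (M : Matrix (Fin (k+1)) (Fin (k+1)) F)
    (key1 : ∀ a l : Fin k, M a.castSucc l.castSucc = M a.succ l.succ)
    (key2 : ∀ l : Fin k, M (Fin.last k) l.castSucc = 0)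
    (key3 : ∀ l : Fin k, M 0 l.succ = 0)
    (i j : Fin (k+1)) : M i j = if (i : ℕ) = (j : ℕ) then M 0 0 else 0 := by
  set m : ℕ → ℕ → F := fun a b =>
    if h : a < k + 1 ∧ b < k + 1 then M ⟨a, h.1⟩ ⟨b, h.2⟩ else 0 with hm
  have hmM : ∀ p q : Fin (k+1), m (p : ℕ) (q : ℕ) = M p q := by
    intro p q
    rw [hm]
    simp only
    rw [dif_pos ⟨p.isLt, q.isLt⟩]
  have K1 : ∀ a b : ℕ, a < k → b < k → m a b = m (a+1) (b+1) := by
    intro a b ha hb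
    rw [hm]
    simp only
    rw [dif_pos ⟨by omega, by omega⟩, dif_pos ⟨by omega, by omega⟩]
    have h0 := key1 ⟨a, ha⟩ ⟨b, hb⟩
    simp only [Fin.castSucc_mk, Fin.succ_mk] at h0
    exact h0
  have K2 : ∀ b : ℕ, b < k → m k b = 0 := by
    intro b hb
    rw [hm]
    simp only
    rw [dif_pos ⟨by omega, by omega⟩]
    have h0 := key2 ⟨b, hb⟩
    simp only [Fin.castSucc_mk, Fin.last] at h0
    exact h0
  have K3 : ∀ b : ℕ, b < k → m 0 (b+1) = 0 := by
    intro b hb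
    rw [hm]
    simp only
    rw [dif_pos ⟨by omega, by omega⟩]
    have h0 := key3 ⟨b, hb⟩
    simp only [Fin.succ_mk] at h0
    have h1 : (0 : Fin (k+1)) = ⟨0, by omega⟩ := Fin.ext (by simp)
    rw [h1] at h0
    exact h0
  have up : ∀ (t a b : ℕ), a + t ≤ k → b + t ≤ k → m a b = m (a+t) (b+t) := by
    intro t
    induction t with
    | zero => intro a b _ _; rfl
    | succ t ih =>
      intro a b ha hb
      rw [ih a b (by omega) (by omega)]
      exact K1 (a+t) (b+t) (by omega) (by omega)
  have hM00 : m 0 0 = M 0 0 := by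
    have := hmM 0 0
    simpa using this
  rcases lt_trichotomy (i : ℕ) (j : ℕ) with h | h | h
  · rw [if_neg (by omega), ← hmM i j]
    have h5 := up (i : ℕ) 0 ((j : ℕ) - (i : ℕ)) (by omega) (by omega)
    rw [show 0 + (i : ℕ) = (i : ℕ) by omega,
        show (j : ℕ) - (i : ℕ) + (i : ℕ) = (j : ℕ) by omega] at h5
    rw [← h5, show (j : ℕ) - (i : ℕ) = ((j : ℕ) - (i : ℕ) - 1) + 1 by omega]
    exact K3 ((j : ℕ) - (i : ℕ) - 1) (by omega)
  · rw [if_pos h, ← hmM i j, ← hM00, ← h]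
    have h5 := up (i : ℕ) 0 0 (by omega) (by omega)
    rw [show 0 + (i : ℕ) = (i : ℕ) by omega] at h5
    exact h5.symm
  · rw [if_neg (by omega), ← hmM i j]
    have h5 := up (k - (i : ℕ)) (i : ℕ) (j : ℕ) (by omega) (by omega)
    rw [show (i : ℕ) + (k - (i : ℕ)) = k by omega] at h5
    rw [h5]
    exact K2 ((j : ℕ) + (k - (i : ℕ))) (by omega)

/-- Main structural lemma. -/
private lemma stab_main (M : Matrix (Fin (k+1)) (Fin (k+1)) F) (C : Matrix (Fin k) (Fin k) F)
    (hBS0 : M * (Matrix.of fun i j => if (i : ℕ) = (j : ℕ) then (1 : F) else 0 :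
        Matrix (Fin (k+1)) (Fin k) F)
      = (Matrix.of fun i j => if (i : ℕ) = (j : ℕ) then (1 : F) else 0 :
        Matrix (Fin (k+1)) (Fin k) F) * C)
    (hBS1 : M * (Matrix.of fun i j => if (i : ℕ) = (j : ℕ) + 1 then (1 : F) else 0 :
        Matrix (Fin (k+1)) (Fin k) F)
      = (Matrix.of fun i j => if (i : ℕ) = (j : ℕ) + 1 then (1 : F) else 0 :
        Matrix (Fin (k+1)) (Fin k) F) * C) :
    M = M 0 0 • (1 : Matrix (Fin (k+1)) (Fin (k+1)) F) ∧
      C = M 0 0 • (1 : Matrix (Fin k) (Fin k) F) := by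
  have key1 : ∀ a l : Fin k, M a.castSucc l.castSucc = M a.succ l.succ := by
    intro a l
    have e0 := stab_mulS0 M a.castSucc l
    have e1 := stab_mulS1 M a.succ l
    rw [← e0, ← e1, hBS0, hBS1, stab_S0mul, stab_S1mul]
    rw [dif_pos (by simpa using a.isLt : ((a.castSucc : ℕ) < k)),
        dif_pos (by simp only [Fin.val_succ]; omega : ((a.succ : ℕ) - 1 < k ∧ 0 < (a.succ : ℕ)))]
    congr 1
  have key2 : ∀ l : Fin k, M (Fin.last k) l.castSucc = 0 := by
    intro l
    have e0 := stab_mulS0 M (Fin.last k) l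
    rw [← e0, hBS0, stab_S0mul, dif_neg (by simp)]
  have key3 : ∀ l : Fin k, M 0 l.succ = 0 := by
    intro l
    have e1 := stab_mulS1 M 0 l
    rw [← e1, hBS1, stab_S1mul, dif_neg (by simp)]
  constructor
  · ext i j
    rw [stab_toeplitz M key1 key2 key3 i j]
    simp only [Matrix.smul_apply, Matrix.one_apply, smul_eq_mul]
    by_cases hij : i = j
    · rw [if_pos (by rw [hij]), if_pos hij, mul_one]
    · rw [if_neg (fun he => hij (Fin.ext he)), if_neg hij, mul_zero]
  · ext a l
    have h9 : C a l = M a.castSucc l.castSucc := by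
      have e0 := stab_mulS0 M a.castSucc l
      rw [← e0, hBS0, stab_S0mul,
        dif_pos (by simpa using a.isLt : ((a.castSucc : ℕ) < k))]
      congr 1
    rw [h9, stab_toeplitz M key1 key2 key3 _ _]
    simp only [Matrix.smul_apply, Matrix.one_apply, smul_eq_mul, Fin.coe_castSucc,
      Fin.val_succ]
    by_cases hal : a = l
    · rw [if_pos (by rw [hal]), if_pos hal, mul_one]
    · rw [if_neg (fun he => hal (Fin.ext he)), if_neg hal, mul_zero]

end StabAux

/-- `(A, B) ∈ GL_k(F) × GL_{k+1}(F)` stabilizes `I_{k,k+1}` (acting on each slice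
`S` by `S ↦ B · S · Aᵀ`) iff there is `c ∈ F^×` with `A = c·I_k` and `B = c⁻¹·I_{k+1}`. -/
theorem stmt2 {F : Type*} [Field F] (k : ℕ) (A : GL (Fin k) F) (B : GL (Fin (k+1)) F) :
    (let S₀ : Matrix (Fin (k+1)) (Fin k) F :=
        Matrix.of fun i j => if (i : ℕ) = (j : ℕ) then 1 else 0
     let S₁ : Matrix (Fin (k+1)) (Fin k) F :=
        Matrix.of fun i j => if (i : ℕ) = (j : ℕ) + 1 then 1 else 0
     (B : Matrix (Fin (k+1)) (Fin (k+1)) F) * S₀ * (A : Matrix (Fin k) (Fin k) F)ᵀ = S₀ ∧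
     (B : Matrix (Fin (k+1)) (Fin (k+1)) F) * S₁ * (A : Matrix (Fin k) (Fin k) F)ᵀ = S₁) ↔
    ∃ c : Fˣ, (A : Matrix (Fin k) (Fin k) F) = (c : F) • (1 : Matrix (Fin k) (Fin k) F) ∧
      (B : Matrix (Fin (k+1)) (Fin (k+1)) F) =
        ((c⁻¹ : Fˣ) : F) • (1 : Matrix (Fin (k+1)) (Fin (k+1)) F) := by
  constructor
  · intro h
    obtain ⟨h₀, h₁⟩ := h
    set C := ((A⁻¹ : GL (Fin k) F) : Matrix (Fin k) (Fin k) F)ᵀ with hCdef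
    have hAA : (A : Matrix (Fin k) (Fin k) F)ᵀ * C = 1 := by
      rw [hCdef, ← Matrix.transpose_mul]
      have h2 : ((A⁻¹ : GL (Fin k) F) : Matrix (Fin k) (Fin k) F) *
          (A : Matrix (Fin k) (Fin k) F) = 1 := by
        have := A.inv_mul
        exact_mod_cast this
      rw [h2, Matrix.transpose_one]
    have hBS0 := congrArg (fun X => X * C) h₀
    have hBS1 := congrArg (fun X => X * C) h₁
    simp only [Matrix.mul_assoc, hAA, Matrix.mul_one] at hBS0 hBS1
    obtain ⟨hBd, hCd⟩ := stab_main ((B : Matrix (Fin (k+1)) (Fin (k+1)) F)) C hBS0 hBS1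
    set d : F := (B : Matrix (Fin (k+1)) (Fin (k+1)) F) 0 0 with hddef
    have hdet : IsUnit ((B : Matrix (Fin (k+1)) (Fin (k+1)) F)).det :=
      (Matrix.isUnit_iff_isUnit_det _).mp B.isUnit
    have hd0 : d ≠ 0 := by
      intro hd
      rw [hBd, hd, zero_smul, Matrix.det_zero] at hdet
      exact (by simp at hdet : False)
    have hAinv : ((A⁻¹ : GL (Fin k) F) : Matrix (Fin k) (Fin k) F) =
        d • (1 : Matrix (Fin k) (Fin k) F) := by
      have := congrArg Matrix.transpose hCd
      simpa [hCdef] using this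
    have hAd : d • (A : Matrix (Fin k) (Fin k) F) = 1 := by
      have hmul : (A : Matrix (Fin k) (Fin k) F) *
          ((A⁻¹ : GL (Fin k) F) : Matrix (Fin k) (Fin k) F) = 1 := by
        have := A.mul_inv
        exact_mod_cast this
      rw [hAinv, Matrix.mul_smul, Matrix.mul_one] at hmul
      exact hmul
    refine ⟨(Units.mk0 d hd0)⁻¹, ?_, ?_⟩
    · have h3 := congrArg (fun X => d⁻¹ • X) hAd
      simp only [smul_smul, inv_mul_cancel₀ hd0, one_smul] at h3
      rw [h3]
      norm_num
    · rw [hBd]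
      norm_num
  · rintro ⟨c, hA, hB⟩
    refine ⟨?_, ?_⟩ <;>
      rw [hA, hB] <;>
      simp [Matrix.smul_mul, Matrix.mul_smul, smul_smul, Matrix.transpose_smul,
        inv_mul_cancel₀ c.ne_zero]
end

section
/- The action of GL_k(F) × GL_{k+1}(F) on the set M_k(F) of nondegenerate 2 × k × (k+1) hypermatrices over F (acting by simultaneous row and column operations on both slices) is transitive: every nondegenerate 2 × k × (k+1) hypermatrix lies in the orbit of I_{k,k+1}. -/
open Matrix

section Helpers
variable {F : Type*} [Field F] {K : Type*} [Field K]

private lemma mulVec_map' (f : F →+* K) {a b : ℕ} (M : Matrix (Fin a) (Fin b) F)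
    (x : Fin b → F) : (M.map f) *ᵥ (f ∘ x) = f ∘ (M *ᵥ x) := by
  funext i
  exact (RingHom.map_mulVec f M x i).symm

private lemma vecMul_map' (f : F →+* K) {a b : ℕ} (M : Matrix (Fin a) (Fin b) F)
    (x : Fin a → F) : (f ∘ x) ᵥ* (M.map f) = f ∘ (x ᵥ* M) := by
  funext i
  exact (RingHom.map_vecMul f M x i).symm

private lemma sumIk {n : ℕ} (w : Fin (n+1) → F) (j : Fin n) :
    (∑ i : Fin (n+1), w i * (if (i : ℕ) = (j : ℕ) then (1:F) else 0)) = w (Fin.castSucc j) := by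
  rw [Finset.sum_eq_single (Fin.castSucc j)]
  · simp
  · intro i _ hne
    have h : ¬ ((i : ℕ) = (j : ℕ)) := fun h => hne (Fin.ext (by simpa using h))
    simp [h]
  · simp

private lemma sumJk {n : ℕ} (w : Fin (n+1) → F) (j : Fin n) :
    (∑ i : Fin (n+1), w i * (if (i : ℕ) = (j : ℕ) + 1 then (1:F) else 0)) = w (Fin.succ j) := by
  rw [Finset.sum_eq_single (Fin.succ j)]
  · simp
  · intro i _ hne
    have h : ¬ ((i : ℕ) = (j : ℕ) + 1) := fun h => hne (Fin.ext (by simpa using h))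
    simp [h]
  · simp

private lemma mul_IkE {a n : ℕ} (X : Matrix (Fin a) (Fin (n+1)) F) (r : Fin a) (j : Fin n) :
    (X * (Matrix.of fun (i : Fin (n+1)) (j : Fin n) => if (i:ℕ) = (j:ℕ) then (1:F) else 0)) r j
      = X r (Fin.castSucc j) := by
  rw [Matrix.mul_apply]
  exact sumIk (fun i => X r i) j

private lemma mul_JkE {a n : ℕ} (X : Matrix (Fin a) (Fin (n+1)) F) (r : Fin a) (j : Fin n) :
    (X * (Matrix.of fun (i : Fin (n+1)) (j : Fin n) => if (i:ℕ) = (j:ℕ)+1 then (1:F) else 0)) r j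
      = X r (Fin.succ j) := by
  rw [Matrix.mul_apply]
  exact sumJk (fun i => X r i) j

private lemma vec_IkE {n : ℕ} (w : Fin (n+1) → F) (j : Fin n) :
    (w ᵥ* (Matrix.of fun (i : Fin (n+1)) (j : Fin n) => if (i:ℕ) = (j:ℕ) then (1:F) else 0)) j
      = w (Fin.castSucc j) := by
  rw [show (w ᵥ* (Matrix.of fun (i : Fin (n+1)) (j : Fin n) =>
      if (i:ℕ) = (j:ℕ) then (1:F) else 0)) j
    = ∑ i, w i * (if (i:ℕ) = (j:ℕ) then (1:F) else 0) from by
      simp [Matrix.vecMul, dotProduct]]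
  exact sumIk w j

private lemma inj_of_rank {k : ℕ} {M : Matrix (Fin (k+1)) (Fin k) K}
    (h : M.rank = k) (x : Fin k → K) (hx : M *ᵥ x = 0) : x = 0 := by
  have h1 := LinearMap.finrank_range_add_finrank_ker M.mulVecLin
  rw [Module.finrank_fin_fun] at h1
  have hr : Module.finrank K (LinearMap.range M.mulVecLin) = k := h
  have hker : Module.finrank K (LinearMap.ker M.mulVecLin) = 0 := by omega
  have hb : LinearMap.ker M.mulVecLin = ⊥ := Submodule.finrank_eq_zero.mp hker
  have hmem : x ∈ LinearMap.ker M.mulVecLin := by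
    simpa [LinearMap.mem_ker, Matrix.mulVecLin_apply] using hx
  rw [hb] at hmem
  simpa using hmem


private lemma key (f : F →+* K) [IsAlgClosed K] (k : ℕ) :
    ∀ S₀ S₁ : Matrix (Fin (k+1)) (Fin k) F,
    (∀ c₀ c₁ : K, ¬(c₀ = 0 ∧ c₁ = 0) → ∀ x : Fin k → K,
        (c₀ • S₀.map f + c₁ • S₁.map f) *ᵥ x = 0 → x = 0) →
    ∃ (C : Matrix (Fin k) (Fin k) F) (B : Matrix (Fin (k+1)) (Fin (k+1)) F),
      IsUnit C.det ∧ IsUnit B.det ∧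
      S₀ * C = B * (Matrix.of fun (i : Fin (k+1)) (j : Fin k) =>
        if (i : ℕ) = (j : ℕ) then (1:F) else 0) ∧
      S₁ * C = B * (Matrix.of fun (i : Fin (k+1)) (j : Fin k) =>
        if (i : ℕ) = (j : ℕ) + 1 then (1:F) else 0) := by
  induction k with
  | zero =>
    intro S₀ S₁ _
    refine ⟨1, 1, by simp, by simp, ?_, ?_⟩ <;>
      · ext i j
        exact j.elim0
  | succ m IH =>
    intro S₀ S₁ hnd
    -- injectivity of S₀ over K and over F
    have hS0K : ∀ x : Fin (m+1) → K, S₀.map f *ᵥ x = 0 → x = 0 := by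
      intro x hx
      refine hnd 1 0 (by simp) x ?_
      simpa using hx
    have hS0 : ∀ x : Fin (m+1) → F, S₀ *ᵥ x = 0 → x = 0 := by
      intro x hx
      have h1 : S₀.map f *ᵥ (f ∘ x) = 0 := by
        rw [mulVec_map' f S₀ x, hx]
        funext i; simp
      have h2 := hS0K _ h1
      funext i
      exact f.injective (by simpa using congrFun h2 i)
    -- left kernel vector φ of S₀
    obtain ⟨φ, hφmem, hφ0⟩ : ∃ φ ∈ LinearMap.ker (S₀ᵀ).mulVecLin, φ ≠ (0 : Fin (m+2) → F) := by
      apply Submodule.ne_bot_iff _ |>.mp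
      intro hbot
      have h1 := LinearMap.finrank_range_add_finrank_ker (S₀ᵀ).mulVecLin
      rw [hbot, finrank_bot, Module.finrank_fin_fun] at h1
      have h2 : Module.finrank F (LinearMap.range (S₀ᵀ).mulVecLin) ≤ m + 1 := by
        have := Submodule.finrank_le (LinearMap.range (S₀ᵀ).mulVecLin)
        rwa [Module.finrank_fin_fun] at this
      omega
    have hφS : φ ᵥ* S₀ = 0 := by
      have h1 := LinearMap.mem_ker.mp hφmem
      rwa [Matrix.mulVecLin_apply, Matrix.mulVec_transpose] at h1
    set u : Fin (m+1) → F := φ ᵥ* S₁ with hudef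
    have hu : u ≠ 0 := by
      intro hu0
      have hu0' : φ ᵥ* S₁ = 0 := by rw [← hudef]; exact hu0
      set φK : Fin (m+2) → K := f ∘ φ with hφKdef
      have hφK0 : φK ᵥ* S₀.map f = 0 := by
        rw [hφKdef, vecMul_map' f S₀ φ, hφS]
        funext j; simp
      have hφK1 : φK ᵥ* S₁.map f = 0 := by
        rw [hφKdef, vecMul_map' f S₁ φ, hu0']
        funext j; simp
      obtain ⟨i₀, hi₀⟩ : ∃ i, φ i ≠ 0 := Function.ne_iff.mp hφ0
      have hφKi₀ : φK i₀ ≠ 0 := by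
        rw [hφKdef]
        exact fun h => hi₀ (f.injective (by simpa using h))
      set T₀ : Matrix (Fin (m+1)) (Fin (m+1)) K := (S₀.map f).submatrix i₀.succAbove id with hT₀
      set T₁ : Matrix (Fin (m+1)) (Fin (m+1)) K := (S₁.map f).submatrix i₀.succAbove id with hT₁
      obtain ⟨c₀, c₁, hc, x, hx0, hTx⟩ :
          ∃ c₀ c₁ : K, ¬(c₀ = 0 ∧ c₁ = 0) ∧ ∃ x : Fin (m+1) → K, x ≠ 0 ∧
            (c₀ • T₀ + c₁ • T₁) *ᵥ x = 0 := by
        by_cases hd : T₁.det = 0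
        · obtain ⟨x, hx0, hx⟩ := (Matrix.exists_mulVec_eq_zero_iff).mpr hd
          exact ⟨0, 1, by simp, x, hx0, by simpa using hx⟩
        · have hunit : IsUnit T₁.det := isUnit_iff_ne_zero.mpr hd
          set N : Matrix (Fin (m+1)) (Fin (m+1)) K := -(T₁⁻¹ * T₀) with hN
          have hmonic := N.charpoly_monic
          have hdeg : N.charpoly.natDegree = m + 1 := by
            rw [Matrix.charpoly_natDegree_eq_dim]; simp
          obtain ⟨t, ht⟩ := IsAlgClosed.exists_root N.charpoly (by
            rw [Polynomial.degree_eq_natDegree hmonic.ne_zero, hdeg]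
            exact_mod_cast Nat.succ_ne_zero m)
          have heval : N.charpoly.eval t
              = (t • (1 : Matrix (Fin (m+1)) (Fin (m+1)) K) - N).det := by
            rw [Matrix.charpoly, ← Polynomial.coe_evalRingHom, RingHom.map_det]
            congr 1
            ext i j
            by_cases h : i = j
            · subst h
              simp [charmatrix_apply_eq, Matrix.smul_apply, Matrix.one_apply]
            · simp [charmatrix_apply_ne _ _ _ h, Matrix.smul_apply, Matrix.one_apply, h]
          have hf : T₁ * (t • 1 - N) = T₀ + t • T₁ := by
            rw [Matrix.mul_sub, Matrix.mul_smul, mul_one, hN, Matrix.mul_neg,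
              sub_neg_eq_add, Matrix.mul_nonsing_inv_cancel_left (A := T₁) T₀ hunit]
            exact add_comm _ _
          have h2 : (T₀ + t • T₁).det = 0 := by
            rw [← hf, Matrix.det_mul]
            have h3 : (t • 1 - N).det = 0 := by
              rw [← heval]; exact ht
            rw [h3, mul_zero]
          obtain ⟨x, hx0, hx⟩ := (Matrix.exists_mulVec_eq_zero_iff).mpr h2
          refine ⟨1, t, by simp, x, hx0, by simpa using hx⟩
      set M : Matrix (Fin (m+2)) (Fin (m+1)) K := c₀ • S₀.map f + c₁ • S₁.map f with hM
      have hsub : (c₀ • T₀ + c₁ • T₁) = M.submatrix i₀.succAbove id := by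
        ext r j
        simp [hT₀, hT₁, hM, Matrix.submatrix_apply, Matrix.add_apply, Matrix.smul_apply]
      set y : Fin (m+2) → K := M *ᵥ x with hy
      have hy1 : ∀ j, y (i₀.succAbove j) = 0 := by
        intro j
        have h1 := congrFun hTx j
        rw [hsub] at h1
        exact h1
      have hy2 : y = c₀ • (S₀.map f *ᵥ x) + c₁ • (S₁.map f *ᵥ x) := by
        rw [hy, hM, Matrix.add_mulVec, Matrix.smul_mulVec, Matrix.smul_mulVec]
      have hφy : φK ⬝ᵥ y = 0 := by
        rw [hy2, dotProduct_add, dotProduct_smul, dotProduct_smul,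
          Matrix.dotProduct_mulVec, Matrix.dotProduct_mulVec, hφK0, hφK1]
        simp
      have hyi₀ : y i₀ = 0 := by
        have hsum := Fin.sum_univ_succAbove (fun i => φK i * y i) i₀
        have h0 : ∑ i, φK i * y i = 0 := by
          simpa [dotProduct] using hφy
        rw [hsum] at h0
        simp only [hy1, mul_zero, Finset.sum_const_zero, add_zero] at h0
        exact (mul_eq_zero.mp h0).resolve_left hφKi₀
      have hy0 : y = 0 := by
        funext i
        rcases eq_or_ne i i₀ with rfl | hne
        · exact hyi₀
        · obtain ⟨j, rfl⟩ := Fin.exists_succAbove_eq hne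
          exact hy1 j
      exact hx0 (hnd c₀ c₁ hc x hy0)
    obtain ⟨i₁, hi₁⟩ : ∃ i, u i ≠ 0 := Function.ne_iff.mp hu
    set P : Matrix (Fin (m+1)) (Fin m) F :=
      Matrix.of fun i j => if i = i₁.succAbove j then 1
        else if i = i₁ then -(u (i₁.succAbove j) / u i₁) else 0 with hPdef
    set L : Matrix (Fin m) (Fin (m+1)) F :=
      Matrix.of fun j i => if i = i₁.succAbove j then 1 else 0 with hLdef
    have hLP : L * P = 1 := by
      ext j j'
      rw [Matrix.mul_apply]
      rw [Finset.sum_eq_single (i₁.succAbove j)]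
      · have h2 : i₁.succAbove j ≠ i₁ := Fin.succAbove_ne i₁ j
        by_cases h : j = j'
        · subst h
          simp [hLdef, hPdef]
        · have h1 : i₁.succAbove j ≠ i₁.succAbove j' :=
            fun hh => h (Fin.succAbove_right_injective hh)
          simp [hLdef, hPdef, h1, h2, Matrix.one_apply, h]
      · intro i _ hne
        simp [hLdef, hne]
      · simp
    have huP : u ᵥ* P = 0 := by
      funext j
      have hexp : (u ᵥ* P) j = ∑ i, u i * P i j := by
        simp [Matrix.vecMul, dotProduct]
      rw [hexp, Fin.sum_univ_succAbove (fun i => u i * P i j) i₁]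
      have e1 : P i₁ j = -(u (i₁.succAbove j) / u i₁) := by
        simp [hPdef, (Fin.succAbove_ne i₁ j).symm]
      have e2 : ∀ j' : Fin m, P (i₁.succAbove j') j = if j' = j then 1 else 0 := by
        intro j'
        by_cases h : j' = j
        · subst h; simp [hPdef]
        · have h1 : i₁.succAbove j' ≠ i₁.succAbove j :=
            fun hh => h (Fin.succAbove_right_injective hh)
          simp [hPdef, h1, Fin.succAbove_ne, h]
      rw [e1]
      simp only [e2, mul_ite, mul_one, mul_zero]
      rw [Finset.sum_ite_eq' Finset.univ j (fun j' => u (i₁.succAbove j'))]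
      simp only [Finset.mem_univ, if_true]
      rw [mul_neg, mul_comm, div_mul_cancel₀ _ hi₁]
      simp
    have hPK : ∀ x : Fin m → K, P.map f *ᵥ x = 0 → x = 0 := by
      intro x hx
      have h1 : (L.map f) *ᵥ (P.map f *ᵥ x) = x := by
        rw [Matrix.mulVec_mulVec, ← Matrix.map_mul, hLP,
          Matrix.map_one f f.map_zero f.map_one, Matrix.one_mulVec]
      rw [hx, Matrix.mulVec_zero] at h1
      exact h1.symm
    -- range of S₀ is the kernel of the φ functional
    have hrangeS0 : ∀ w : Fin (m+2) → F, φ ⬝ᵥ w = 0 → ∃ z, S₀ *ᵥ z = w := by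
      have hker : LinearMap.ker S₀.mulVecLin = ⊥ := LinearMap.ker_eq_bot'.mpr (by
        intro x hx
        exact hS0 x (by simpa [Matrix.mulVecLin_apply] using hx))
      have h1 := LinearMap.finrank_range_add_finrank_ker S₀.mulVecLin
      rw [hker, finrank_bot, Module.finrank_fin_fun] at h1
      set ℓ : (Fin (m+2) → F) →ₗ[F] F :=
        { toFun := fun w => φ ⬝ᵥ w
          map_add' := fun a b => by
            simp [dotProduct, mul_add, Finset.sum_add_distrib]
          map_smul' := fun c a => by
            simp [dotProduct, Finset.mul_sum, mul_left_comm] } with hℓ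
      have hrange : LinearMap.range ℓ = ⊤ := by
        rw [LinearMap.range_eq_top]
        intro yv
        obtain ⟨iφ, hiφ⟩ := Function.ne_iff.mp hφ0
        refine ⟨Pi.single iφ (yv / φ iφ), ?_⟩
        show φ ⬝ᵥ Pi.single iφ (yv / φ iφ) = yv
        rw [dotProduct_single, mul_comm, div_mul_cancel₀ _ hiφ]
      have h2 := LinearMap.finrank_range_add_finrank_ker ℓ
      rw [hrange, finrank_top, Module.finrank_fin_fun, Module.finrank_self] at h2
      have hle : LinearMap.range S₀.mulVecLin ≤ LinearMap.ker ℓ := by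
        rintro w ⟨x, rfl⟩
        show φ ⬝ᵥ (S₀.mulVecLin x) = 0
        rw [Matrix.mulVecLin_apply, Matrix.dotProduct_mulVec, hφS, zero_dotProduct]
      have hfr : Module.finrank F (LinearMap.ker ℓ) ≤
          Module.finrank F (LinearMap.range S₀.mulVecLin) := by omega
      have heq : LinearMap.range S₀.mulVecLin = LinearMap.ker ℓ :=
        Submodule.eq_of_le_of_finrank_le hle hfr
      intro w hw
      have hwk : w ∈ LinearMap.ker ℓ := by
        show φ ⬝ᵥ w = 0
        exact hw
      rw [← heq] at hwk
      obtain ⟨z, hz⟩ := hwk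
      exact ⟨z, by simpa [Matrix.mulVecLin_apply] using hz⟩
    have hQex : ∀ j : Fin m, ∃ z : Fin (m+1) → F, S₀ *ᵥ z = S₁ *ᵥ (fun i => P i j) := by
      intro j
      apply hrangeS0
      rw [Matrix.dotProduct_mulVec]
      have h1 : (φ ᵥ* S₁) ⬝ᵥ (fun i => P i j) = (u ᵥ* P) j := by
        rw [← hudef]
        simp [Matrix.vecMul, dotProduct]
      rw [h1, huP]
      simp
    choose qv hqv using hQex
    set Q : Matrix (Fin (m+1)) (Fin m) F := Matrix.of fun i j => qv j i with hQdef
    have hSQ : S₀ * Q = S₁ * P := by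
      ext i j
      have h1 : (S₀ * Q) i j = (S₀ *ᵥ qv j) i := by
        simp [Matrix.mul_apply, Matrix.mulVec, dotProduct, hQdef]
      have h2 : (S₁ * P) i j = (S₁ *ᵥ fun r => P r j) i := by
        simp [Matrix.mul_apply, Matrix.mulVec, dotProduct]
      rw [h1, h2, hqv j]
    -- nondegeneracy of the smaller pencil (P, Q)
    have hnd' : ∀ c₀ c₁ : K, ¬(c₀ = 0 ∧ c₁ = 0) → ∀ x : Fin m → K,
        (c₀ • P.map f + c₁ • Q.map f) *ᵥ x = 0 → x = 0 := by
      intro c₀ c₁ hc x hx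
      apply hPK
      apply hnd c₀ c₁ hc (P.map f *ᵥ x)
      have hmm : S₁.map f * P.map f = S₀.map f * Q.map f := by
        rw [← Matrix.map_mul, ← Matrix.map_mul, hSQ]
      have hkey : (c₀ • S₀.map f + c₁ • S₁.map f) * (P.map f)
          = (S₀.map f) * (c₀ • P.map f + c₁ • Q.map f) := by
        rw [Matrix.add_mul, Matrix.mul_add, Matrix.smul_mul, Matrix.smul_mul,
          Matrix.mul_smul, Matrix.mul_smul, hmm]
      rw [Matrix.mulVec_mulVec, hkey, ← Matrix.mulVec_mulVec, hx, Matrix.mulVec_zero]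
    obtain ⟨C2, B2, hC2, hB2, hPC, hQC⟩ := IH P Q hnd'
    -- the chain identity
    have hchain : ∀ (r : Fin (m+2)) (j : Fin m),
        (S₁ * B2) r (Fin.castSucc j) = (S₀ * B2) r (Fin.succ j) := by
      intro r j
      have e : S₁ * (P * C2) = S₀ * (Q * C2) := by
        rw [← Matrix.mul_assoc, ← Matrix.mul_assoc, hSQ]
      rw [hPC, hQC, ← Matrix.mul_assoc, ← Matrix.mul_assoc] at e
      calc (S₁ * B2) r (Fin.castSucc j)
          = (S₁ * B2 * (Matrix.of fun (i : Fin (m+1)) (j : Fin m) =>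
              if (i : ℕ) = (j : ℕ) then (1:F) else 0)) r j := (mul_IkE (S₁ * B2) r j).symm
        _ = (S₀ * B2 * (Matrix.of fun (i : Fin (m+1)) (j : Fin m) =>
              if (i : ℕ) = (j : ℕ) + 1 then (1:F) else 0)) r j := by rw [e]
        _ = (S₀ * B2) r (Fin.succ j) := mul_JkE (S₀ * B2) r j
    set B : Matrix (Fin (m+2)) (Fin (m+2)) F :=
      Matrix.of fun r i => if h : (i : ℕ) < m + 1 then (S₀ * B2) r ⟨i, h⟩
        else (S₁ * B2) r (Fin.last m) with hBdef
    have hBc : ∀ (r : Fin (m+2)) (j : Fin (m+1)), B r (Fin.castSucc j) = (S₀ * B2) r j := by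
      intro r j
      have hj : ((Fin.castSucc j : Fin (m+2)) : ℕ) < m + 1 := by
        simpa using j.isLt
      simp only [hBdef, Matrix.of_apply]
      rw [dif_pos hj]
      exact congrArg _ (Fin.ext (by simp))
    have hBl : ∀ r : Fin (m+2), B r (Fin.last (m+1)) = (S₁ * B2) r (Fin.last m) := by
      intro r
      simp only [hBdef, Matrix.of_apply]
      rw [dif_neg (by simp)]
    have hBI : S₀ * B2 = B * (Matrix.of fun (i : Fin (m+2)) (j : Fin (m+1)) =>
        if (i : ℕ) = (j : ℕ) then (1:F) else 0) := by
      ext r j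
      rw [mul_IkE B r j, hBc]
    have hBJ : S₁ * B2 = B * (Matrix.of fun (i : Fin (m+2)) (j : Fin (m+1)) =>
        if (i : ℕ) = (j : ℕ) + 1 then (1:F) else 0) := by
      ext r j
      rw [mul_JkE B r j]
      by_cases hj : (j : ℕ) < m
      · set j' : Fin m := ⟨j, hj⟩ with hj'
        have h1 : Fin.succ j = Fin.castSucc (Fin.succ j') := by
          apply Fin.ext; simp [hj']
        have h2 : j = Fin.castSucc j' := by
          apply Fin.ext; simp [hj']
        rw [h1, hBc]
        conv_lhs => rw [h2]
        exact hchain r j'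
      · have h2 : j = Fin.last m := by
          apply Fin.ext
          have := j.isLt
          simp only [Fin.val_last]
          omega
        have h1 : Fin.succ j = Fin.last (m+1) := by
          apply Fin.ext; simp [h2]
        rw [h1, hBl, h2]
    -- B is invertible
    have hBdet : IsUnit B.det := by
      rw [isUnit_iff_ne_zero]
      intro hdet
      obtain ⟨c, hc0, hc⟩ := (Matrix.exists_mulVec_eq_zero_iff).mpr hdet
      have hdec : ∀ r, (S₀ *ᵥ (B2 *ᵥ (c ∘ Fin.castSucc))) r
          + c (Fin.last (m+1)) * (S₁ * B2) r (Fin.last m) = 0 := by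
        intro r
        have h1 := congrFun hc r
        have h2 : (B *ᵥ c) r = ∑ i, B r i * c i := by
          simp [Matrix.mulVec, dotProduct]
        rw [h2, Fin.sum_univ_castSucc] at h1
        have h3 : ∀ j : Fin (m+1),
            B r (Fin.castSucc j) * c (Fin.castSucc j) = (S₀*B2) r j * (c ∘ Fin.castSucc) j := by
          intro j; rw [hBc]; rfl
        rw [Finset.sum_congr rfl (fun j _ => h3 j)] at h1
        have h4 : ∑ j, (S₀*B2) r j * (c ∘ Fin.castSucc) j
            = (S₀ *ᵥ (B2 *ᵥ (c ∘ Fin.castSucc))) r := by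
          rw [Matrix.mulVec_mulVec]
          simp [Matrix.mulVec, dotProduct]
        rw [h4, hBl r] at h1
        simpa [mul_comm] using h1
      have hφc : c (Fin.last (m+1)) * (u ᵥ* B2) (Fin.last m) = 0 := by
        have h5 : ∑ r, φ r * (S₀ *ᵥ (B2 *ᵥ (c ∘ Fin.castSucc))) r
            + ∑ r, φ r * (c (Fin.last (m+1)) * (S₁ * B2) r (Fin.last m)) = 0 := by
          rw [← Finset.sum_add_distrib]
          apply Finset.sum_eq_zero
          intro r _
          rw [← mul_add, hdec r, mul_zero]
        have h6 : ∑ r, φ r * (S₀ *ᵥ (B2 *ᵥ (c ∘ Fin.castSucc))) r = 0 := by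
          have h7 : φ ⬝ᵥ (S₀ *ᵥ (B2 *ᵥ (c ∘ Fin.castSucc))) = 0 := by
            rw [Matrix.dotProduct_mulVec, hφS, zero_dotProduct]
          simpa [dotProduct] using h7
        have h8 : ∑ r, φ r * (c (Fin.last (m+1)) * (S₁ * B2) r (Fin.last m))
            = c (Fin.last (m+1)) * (u ᵥ* B2) (Fin.last m) := by
          have e1 : ∑ r, φ r * (S₁ * B2) r (Fin.last m) = (φ ᵥ* (S₁ * B2)) (Fin.last m) := by
            simp [Matrix.vecMul, dotProduct]
          have e2 : ∀ r : Fin (m+2), φ r * (c (Fin.last (m+1)) * (S₁ * B2) r (Fin.last m))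
              = c (Fin.last (m+1)) * (φ r * (S₁ * B2) r (Fin.last m)) := fun r => by ring
          rw [Finset.sum_congr rfl (fun r _ => e2 r), ← Finset.mul_sum, e1,
            ← Matrix.vecMul_vecMul, ← hudef]
        rw [h6, zero_add, h8] at h5
        exact h5
      have hub : (u ᵥ* B2) (Fin.last m) ≠ 0 := by
        intro h0
        have hall : u ᵥ* B2 = 0 := by
          funext i
          induction i using Fin.lastCases with
          | last => exact h0
          | cast j =>
            calc (u ᵥ* B2) (Fin.castSucc j)
                = ((u ᵥ* B2) ᵥ* (Matrix.of fun (i : Fin (m+1)) (j : Fin m) =>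
                    if (i : ℕ) = (j : ℕ) then (1:F) else 0)) j := (vec_IkE (u ᵥ* B2) j).symm
              _ = (u ᵥ* (B2 * (Matrix.of fun (i : Fin (m+1)) (j : Fin m) =>
                    if (i : ℕ) = (j : ℕ) then (1:F) else 0))) j := by
                    exact congrFun (Matrix.vecMul_vecMul u B2 _) j
              _ = (u ᵥ* (P * C2)) j := by rw [← hPC]
              _ = ((u ᵥ* P) ᵥ* C2) j := congrFun (Matrix.vecMul_vecMul u P C2).symm j
              _ = 0 := by rw [huP]; simp
        have hfin : u ᵥ* (B2 * B2⁻¹) = 0 ᵥ* B2⁻¹ := by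
          rw [← Matrix.vecMul_vecMul, hall]
        rw [Matrix.mul_nonsing_inv _ hB2, Matrix.vecMul_one, Matrix.zero_vecMul] at hfin
        exact hu hfin
      have hclast : c (Fin.last (m+1)) = 0 :=
        (mul_eq_zero.mp hφc).resolve_right hub
      have hz : S₀ *ᵥ (B2 *ᵥ (c ∘ Fin.castSucc)) = 0 := by
        funext r
        have h9 := hdec r
        rw [hclast, zero_mul, add_zero] at h9
        exact h9
      have hz2 : B2 *ᵥ (c ∘ Fin.castSucc) = 0 := hS0 _ hz
      have hcc : c ∘ Fin.castSucc = 0 := by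
        have h10 : (B2⁻¹ * B2) *ᵥ (c ∘ Fin.castSucc) = 0 := by
          rw [← Matrix.mulVec_mulVec, hz2, Matrix.mulVec_zero]
        rwa [Matrix.nonsing_inv_mul _ hB2, Matrix.one_mulVec] at h10
      apply hc0
      funext i
      induction i using Fin.lastCases with
      | last => exact hclast
      | cast j => exact congrFun hcc j
    exact ⟨B2, B, hB2, hBdet, hBI, hBJ⟩

end Helpers

/-- The action of `GL_k(F) × GL_{k+1}(F)` on nondegenerate `2 × k × (k+1)`
hypermatrices, `(A,B)·(S₀,S₁) = (B S₀ Aᵀ, B S₁ Aᵀ)`, is transitive: every nondegenerate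
hypermatrix lies in the orbit of `I_{k,k+1}`. -/
theorem stmt3 {F : Type*} [Field F] (k : ℕ)
    (S₀ S₁ : Matrix (Fin (k+1)) (Fin k) F)
    (hnd : ∀ c₀ c₁ : AlgebraicClosure F, ¬ (c₀ = 0 ∧ c₁ = 0) →
      (c₀ • S₀.map (algebraMap F (AlgebraicClosure F)) +
       c₁ • S₁.map (algebraMap F (AlgebraicClosure F))).rank = k) :
    ∃ (A : GL (Fin k) F) (B : GL (Fin (k+1)) F),
      (B : Matrix (Fin (k+1)) (Fin (k+1)) F) *
        (Matrix.of fun (i : Fin (k+1)) (j : Fin k) => if (i : ℕ) = (j : ℕ) then (1 : F) else 0) *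
        (A : Matrix (Fin k) (Fin k) F)ᵀ = S₀ ∧
      (B : Matrix (Fin (k+1)) (Fin (k+1)) F) *
        (Matrix.of fun (i : Fin (k+1)) (j : Fin k) => if (i : ℕ) = (j : ℕ) + 1 then (1 : F) else 0) *
        (A : Matrix (Fin k) (Fin k) F)ᵀ = S₁ := by
  have h : ∀ c₀ c₁ : AlgebraicClosure F, ¬(c₀ = 0 ∧ c₁ = 0) →
      ∀ x : Fin k → AlgebraicClosure F,
      (c₀ • S₀.map (algebraMap F (AlgebraicClosure F)) +
       c₁ • S₁.map (algebraMap F (AlgebraicClosure F))) *ᵥ x = 0 → x = 0 := by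
    intro c₀ c₁ hc x hx
    exact inj_of_rank (hnd c₀ c₁ hc) x hx
  obtain ⟨C, B, hC, hB, h0, h1⟩ := key (algebraMap F (AlgebraicClosure F)) k S₀ S₁ h
  have hCinv : C⁻¹ * C = 1 := Matrix.nonsing_inv_mul C hC
  have hCT : IsUnit ((C⁻¹)ᵀ) := by
    apply (Matrix.isUnit_iff_isUnit_det _).mpr
    rw [Matrix.det_transpose]
    exact IsUnit.of_mul_eq_one _ (by rw [← Matrix.det_mul, hCinv, Matrix.det_one])
  have hBu : IsUnit B := (Matrix.isUnit_iff_isUnit_det B).mpr hB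
  refine ⟨hCT.unit, hBu.unit, ?_, ?_⟩
  · rw [IsUnit.unit_spec, IsUnit.unit_spec, Matrix.transpose_transpose, ← h0,
      Matrix.mul_nonsing_inv_cancel_right _ _ hC]
  · rw [IsUnit.unit_spec, IsUnit.unit_spec, Matrix.transpose_transpose, ← h1,
      Matrix.mul_nonsing_inv_cancel_right _ _ hC]
end

section
/- The number of nondegenerate 2 × k × (k+1) hypermatrices over the finite field F_q equals q^{k²}·(q-1)^{2k}·[k]!_q·[k+1]!_q, where [n]_q = 1 + q + ⋯ + q^{n-1} and [n]!_q = [1]_q[2]_q⋯[n]_q. -/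
open Matrix Finset

/-- The `q`-integer `[n]_q = 1 + q + ⋯ + q^{n-1}`. -/
def qInt (q n : ℕ) : ℕ := ∑ i ∈ Finset.range n, q ^ i

/-- The `q`-factorial `[n]!_q = [1]_q [2]_q ⋯ [n]_q`. -/
def qFact (q n : ℕ) : ℕ := ∏ i ∈ Finset.range n, qInt q (i + 1)

open Function

namespace Stmt5Aux
variable {K : Type*} [Field K] {k : ℕ}

/-- observability matrix: rows `b ᵥ* A^i`. -/
noncomputable def obsMat (A : Matrix (Fin k) (Fin k) K) (b : Fin k → K) :
    Matrix (Fin k) (Fin k) K := Matrix.of fun i j => (b ᵥ* A ^ (i : ℕ)) j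

lemma row_mul (M : Matrix (Fin k) (Fin k) K) (N : Matrix (Fin k) (Fin k) K) (i : Fin k) :
    (M * N) i = M i ᵥ* N := by
  funext j; simp [Matrix.mul_apply, Matrix.vecMul, dotProduct]

lemma obsMat_mulVec (A : Matrix (Fin k) (Fin k) K) (b : Fin k → K) (v : Fin k → K) (i : Fin k) :
    (obsMat A b *ᵥ v) i = b ⬝ᵥ (A ^ (i : ℕ) *ᵥ v) := by
  simp [obsMat, Matrix.mulVec, Matrix.dotProduct_mulVec]

lemma rank_eq_iff_injective (M : Matrix (Fin (k+1)) (Fin k) K) :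
    M.rank = k ↔ Injective M.mulVecLin := by
  have h := LinearMap.finrank_range_add_finrank_ker M.mulVecLin
  rw [Module.finrank_fintype_fun_eq_card, Fintype.card_fin] at h
  rw [Matrix.rank, ← LinearMap.ker_eq_bot, ← Submodule.finrank_eq_zero]
  omega

end Stmt5Aux

namespace Stmt5Aux
variable {K : Type*} [Field K] {k : ℕ}

lemma sum_mulVec {s : Finset ℕ} (M : ℕ → Matrix (Fin k) (Fin k) K) (v : Fin k → K) :
    (∑ i ∈ s, M i) *ᵥ v = ∑ i ∈ s, M i *ᵥ v := by
  funext j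
  simp only [Matrix.mulVec, dotProduct, Matrix.sum_apply, Finset.sum_mul]
  rw [Finset.sum_comm]
  simp [Matrix.mulVec, dotProduct, Finset.sum_apply]

theorem hautus {K : Type*} [Field K] [IsAlgClosed K] {k : ℕ}
    (A : Matrix (Fin k) (Fin k) K) (b : Fin k → K) :
    IsUnit (obsMat A b) ↔
      ∀ (c : K) (v : Fin k → K), A *ᵥ v = c • v → b ⬝ᵥ v = 0 → v = 0 := by
  constructor
  · intro hO c v hAv hbv
    have h1 : ∀ i : ℕ, A ^ i *ᵥ v = c ^ i • v := by
      intro i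
      induction i with
      | zero => simp
      | succ i ih =>
        rw [pow_succ, ← Matrix.mulVec_mulVec, hAv, Matrix.mulVec_smul, ih, smul_smul,
          pow_succ, mul_comm]
    have h2 : obsMat A b *ᵥ v = 0 := by
      funext i
      rw [obsMat_mulVec, h1, dotProduct_smul, hbv, smul_zero, Pi.zero_apply]
    have hinj := Matrix.mulVec_injective_iff_isUnit.mpr hO
    have := hinj (a₁ := v) (a₂ := 0) (by simpa using h2)
    exact this
  · intro h
    by_contra hO
    have hdet : (obsMat A b).det = 0 := by
      by_contra hd
      exact hO ((Matrix.isUnit_iff_isUnit_det _).mpr (isUnit_iff_ne_zero.mpr hd))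
    obtain ⟨v₀, hv₀ne, hv₀⟩ := (Matrix.exists_mulVec_eq_zero_iff.mpr hdet)
    have hk : 0 < k := by
      rcases Nat.eq_zero_or_pos k with rfl | h
      · exact absurd (funext fun i => i.elim0) hv₀ne
      · exact h
    set W := LinearMap.ker (obsMat A b).mulVecLin with hWdef
    have hmem : ∀ x, x ∈ W ↔ ∀ i : Fin k, b ⬝ᵥ (A ^ (i : ℕ) *ᵥ x) = 0 := by
      intro x
      rw [LinearMap.mem_ker, Matrix.mulVecLin_apply, funext_iff]
      exact forall_congr' fun i => by rw [obsMat_mulVec]; simp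
    -- Cayley-Hamilton: A^k is a combination of lower powers (when k ≥ 1)
    have hCH : A ^ k = ∑ i ∈ Finset.range k, (Polynomial.X ^ k - A.charpoly).coeff i • A ^ i := by
      set p : Polynomial K := Polynomial.X ^ k - A.charpoly with hp
      have hdeg : p.natDegree < k := by
        by_cases hp0 : p = 0
        · rw [hp0]; simpa using hk
        · rw [Polynomial.natDegree_lt_iff_degree_lt hp0]
          have hd : (Polynomial.X ^ k : Polynomial K).degree = A.charpoly.degree := by
            rw [Matrix.charpoly_degree_eq_dim, Polynomial.degree_X_pow, Fintype.card_fin]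
          have hne : (Polynomial.X ^ k : Polynomial K) ≠ 0 := pow_ne_zero k Polynomial.X_ne_zero
          have hlc : (Polynomial.X ^ k : Polynomial K).leadingCoeff = A.charpoly.leadingCoeff := by
            rw [Polynomial.leadingCoeff_X_pow, (Matrix.charpoly_monic A).leadingCoeff]
          have := Polynomial.degree_sub_lt hd hne hlc
          rwa [Polynomial.degree_X_pow] at this
      have h1 : A ^ k = Polynomial.aeval A p := by
        rw [hp, map_sub, Polynomial.aeval_X_pow, Matrix.aeval_self_charpoly, sub_zero]
      rw [h1, Polynomial.aeval_eq_sum_range' hdeg]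
    have hinv : ∀ x ∈ W, A.mulVecLin x ∈ W := by
      intro x hx
      rw [hmem] at hx ⊢
      intro i
      rw [Matrix.mulVecLin_apply, Matrix.mulVec_mulVec, ← pow_succ]
      rcases Nat.lt_or_ge ((i : ℕ) + 1) k with hik | hik
      · exact hx ⟨(i : ℕ) + 1, hik⟩
      · have hik' : (i : ℕ) + 1 = k := le_antisymm i.2 hik
        rw [hik', hCH, sum_mulVec]
        have hdsum : ∀ w : ℕ → (Fin k → K), b ⬝ᵥ (∑ j ∈ Finset.range k, w j) =
            ∑ j ∈ Finset.range k, b ⬝ᵥ w j := by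
          intro w
          simp only [dotProduct, Finset.sum_apply, Finset.mul_sum]
          rw [Finset.sum_comm]
        rw [hdsum]
        refine Finset.sum_eq_zero fun j hj => ?_
        rw [Matrix.smul_mulVec, dotProduct_smul, hx ⟨j, Finset.mem_range.mp hj⟩,
          smul_zero]
    have hWne : W ≠ ⊥ := by
      intro hbot
      have hmemv : v₀ ∈ W := LinearMap.mem_ker.mpr (by simpa [Matrix.mulVecLin_apply] using hv₀)
      rw [hbot] at hmemv
      exact hv₀ne ((Submodule.mem_bot _).mp hmemv)
    have : Nontrivial W := Submodule.nontrivial_iff_ne_bot.mpr hWne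
    obtain ⟨c, hc⟩ := Module.End.exists_eigenvalue ((A.mulVecLin).restrict hinv)
    obtain ⟨⟨v, hvW⟩, hvec⟩ := hc.exists_hasEigenvector
    have hv0 : v ≠ 0 := fun h0 => hvec.2 (Subtype.ext h0)
    have hAv : A *ᵥ v = c • v := by
      have := congrArg Subtype.val hvec.apply_eq_smul
      simpa [LinearMap.restrict_apply, Matrix.mulVecLin_apply] using this
    have hbv : b ⬝ᵥ v = 0 := by
      have := (hmem v).mp hvW ⟨0, hk⟩
      simpa using this
    exact hv0 (h c v hAv hbv)

end Stmt5Aux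

namespace Stmt5Aux

section Pencil
variable {F : Type*} [Field F] {k : ℕ}

/-- the standard matrix `[I; 0]`. -/
def E0 (K : Type*) [Semiring K] (k : ℕ) : Matrix (Fin (k+1)) (Fin k) K :=
  Matrix.of (Fin.snoc (1 : Matrix (Fin k) (Fin k) K) 0)

def Cond (S₀ S₁ : Matrix (Fin (k+1)) (Fin k) F) : Prop :=
  ∀ c₀ c₁ : AlgebraicClosure F, ¬ (c₀ = 0 ∧ c₁ = 0) →
    (c₀ • S₀.map (algebraMap F (AlgebraicClosure F)) +
     c₁ • S₁.map (algebraMap F (AlgebraicClosure F))).rank = k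

lemma map_snoc {K : Type*} [Semiring K] (f : F →+* K) (A : Matrix (Fin k) (Fin k) F)
    (b : Fin k → F) :
    (Matrix.of (Fin.snoc A b) : Matrix (Fin (k+1)) (Fin k) F).map f =
      Matrix.of (Fin.snoc (A.map f) (fun j => f (b j))) := by
  funext i j
  refine Fin.lastCases ?_ (fun i => ?_) i <;>
    simp [Matrix.map_apply, Fin.snoc_castSucc, Fin.snoc_last, Matrix.map_apply, Fin.snoc]

lemma snoc_eta (M : Matrix (Fin (k+1)) (Fin k) F) :
    Matrix.of (Fin.snoc (Matrix.of fun i j => M i.castSucc j) (M (Fin.last k))) = M := by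
  funext i j
  refine Fin.lastCases ?_ (fun i => ?_) i <;> simp [Fin.snoc_castSucc, Fin.snoc_last, Fin.snoc]

lemma combo_snoc {K : Type*} [CommRing K] (c₀ c₁ : K) (A A' : Matrix (Fin k) (Fin k) K)
    (b b' : Fin k → K) :
    c₀ • (Matrix.of (Fin.snoc A b) : Matrix (Fin (k+1)) (Fin k) K) +
      c₁ • Matrix.of (Fin.snoc A' b') =
      Matrix.of (Fin.snoc (c₀ • A + c₁ • A') (c₀ • b + c₁ • b')) := by
  funext i j
  refine Fin.lastCases ?_ (fun i => ?_) i <;>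
    simp [Fin.snoc_castSucc, Fin.snoc_last, Fin.snoc]

lemma inj_snoc_iff {K : Type*} [Field K] (A : Matrix (Fin k) (Fin k) K) (b : Fin k → K) :
    Injective (Matrix.of (Fin.snoc A b) : Matrix (Fin (k+1)) (Fin k) K).mulVecLin ↔
      ∀ v : Fin k → K, A *ᵥ v = 0 → b ⬝ᵥ v = 0 → v = 0 := by
  rw [injective_iff_map_eq_zero]
  constructor
  · intro h v hA hb
    refine h v (funext fun i => ?_)
    refine Fin.lastCases ?_ (fun i => ?_) i
    · simpa [Matrix.mulVecLin_apply, Matrix.mulVec, Fin.snoc_last, Fin.snoc] using hb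
    · simpa [Matrix.mulVecLin_apply, Matrix.mulVec, Fin.snoc_castSucc, Fin.snoc] using congrFun hA i
  · intro h v hv
    refine h v (funext fun i => ?_) ?_
    · simpa [Matrix.mulVecLin_apply, Matrix.mulVec, Fin.snoc_castSucc, Fin.snoc]
        using congrFun hv (Fin.castSucc i)
    · simpa [Matrix.mulVecLin_apply, Matrix.mulVec, Fin.snoc_last, Fin.snoc]
        using congrFun hv (Fin.last k)

lemma cond_mul_left (P : Matrix (Fin (k+1)) (Fin (k+1)) F) (hP : IsUnit P.det)
    (S₀ S₁ : Matrix (Fin (k+1)) (Fin k) F) :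
    Cond (P * S₀) (P * S₁) ↔ Cond S₀ S₁ := by
  have key : ∀ (c₀ c₁ : AlgebraicClosure F),
      (c₀ • (P * S₀).map (algebraMap F (AlgebraicClosure F)) +
        c₁ • (P * S₁).map (algebraMap F (AlgebraicClosure F))).rank =
      (c₀ • S₀.map (algebraMap F (AlgebraicClosure F)) +
        c₁ • S₁.map (algebraMap F (AlgebraicClosure F))).rank := by
    intro c₀ c₁
    rw [Matrix.map_mul, Matrix.map_mul, ← Matrix.mul_smul, ← Matrix.mul_smul, ← Matrix.mul_add]
    refine Matrix.rank_mul_eq_right_of_isUnit_det _ _ ?_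
    have : (P.map (algebraMap F (AlgebraicClosure F))).det =
        algebraMap F (AlgebraicClosure F) P.det := by
      rw [RingHom.map_det]; rfl
    rw [this]
    exact hP.map _
  exact forall₂_congr fun c₀ c₁ => imp_congr_right fun _ => by rw [key c₀ c₁]

end Pencil
end Stmt5Aux

namespace Stmt5Aux
section Pencil2
variable {F : Type*} [Field F] {k : ℕ}

lemma obsMat_map (A : Matrix (Fin k) (Fin k) F) (b : Fin k → F) :
    (obsMat A b).map (algebraMap F (AlgebraicClosure F)) =
      obsMat (A.map (algebraMap F (AlgebraicClosure F)))
        (fun j => algebraMap F (AlgebraicClosure F) (b j)) := by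
  funext i j
  have hpow : (A ^ (i : ℕ)).map (algebraMap F (AlgebraicClosure F)) =
      (A.map (algebraMap F (AlgebraicClosure F))) ^ (i : ℕ) := by
    have := map_pow ((algebraMap F (AlgebraicClosure F)).mapMatrix) A (i : ℕ)
    simpa [RingHom.mapMatrix_apply] using this
  simp only [obsMat, Matrix.map_apply, Matrix.of_apply, Matrix.vecMul, dotProduct,
    map_sum, _root_.map_mul, ← hpow]

lemma isUnit_map_iff (M : Matrix (Fin k) (Fin k) F) :
    IsUnit (M.map (algebraMap F (AlgebraicClosure F))) ↔ IsUnit M := by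
  rw [Matrix.isUnit_iff_isUnit_det, Matrix.isUnit_iff_isUnit_det]
  have hdet : (M.map (algebraMap F (AlgebraicClosure F))).det =
      algebraMap F (AlgebraicClosure F) M.det := by rw [RingHom.map_det]; rfl
  rw [hdet, isUnit_iff_ne_zero, isUnit_iff_ne_zero,
    map_ne_zero_iff _ (algebraMap F (AlgebraicClosure F)).injective]

lemma cond_E0_iff (A : Matrix (Fin k) (Fin k) F) (b : Fin k → F) :
    Cond (E0 F k) (Matrix.of (Fin.snoc A b)) ↔ IsUnit (obsMat A b) := by
  set f := algebraMap F (AlgebraicClosure F)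
  set Af := A.map f with hAf
  set bf := fun j => f (b j) with hbf
  have hE : (E0 F k).map f = E0 (AlgebraicClosure F) k := by
    unfold E0
    rw [map_snoc]
    have h1 : (1 : Matrix (Fin k) (Fin k) F).map f = 1 :=
      Matrix.map_one f (map_zero f) (map_one f)
    have h0 : (fun j => f ((0 : Fin k → F) j)) = (0 : Fin k → AlgebraicClosure F) := by
      funext j; simp
    rw [h1, h0]
  have key : ∀ c₀ c₁ : AlgebraicClosure F,
      ((c₀ • (E0 F k).map f + c₁ • (Matrix.of (Fin.snoc A b)).map f).rank = k) ↔
      ∀ v : Fin k → AlgebraicClosure F,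
        c₀ • v + c₁ • (Af *ᵥ v) = 0 → c₁ * (bf ⬝ᵥ v) = 0 → v = 0 := by
    intro c₀ c₁
    rw [hE, map_snoc, ← hAf, ← hbf]
    show ((c₀ • Matrix.of (Fin.snoc (1 : Matrix (Fin k) (Fin k) (AlgebraicClosure F))
        (0 : Fin k → AlgebraicClosure F)) + c₁ • Matrix.of (Fin.snoc Af bf)).rank = k) ↔ _
    rw [combo_snoc, rank_eq_iff_injective, inj_snoc_iff]
    refine forall_congr' fun v => ?_
    rw [Matrix.add_mulVec, Matrix.smul_mulVec, Matrix.smul_mulVec, Matrix.one_mulVec,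
      add_dotProduct, smul_dotProduct, smul_dotProduct,
      zero_dotProduct, smul_zero, zero_add, smul_eq_mul]
  rw [show Cond (E0 F k) (Matrix.of (Fin.snoc A b)) ↔
      ∀ c₀ c₁ : AlgebraicClosure F, ¬(c₀ = 0 ∧ c₁ = 0) →
        ∀ v : Fin k → AlgebraicClosure F,
          c₀ • v + c₁ • (Af *ᵥ v) = 0 → c₁ * (bf ⬝ᵥ v) = 0 → v = 0 from
    forall₂_congr fun c₀ c₁ => imp_congr_right fun _ => key c₀ c₁]
  rw [← isUnit_map_iff, obsMat_map, ← hAf]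
  rw [hautus]
  constructor
  · intro h c v hAv hbv
    refine h (-c) 1 (by simp) v ?_ ?_
    · rw [hAv]; simp
    · rw [hbv, mul_zero]
  · intro h c₀ c₁ hne v h1 h2
    by_cases hc : c₁ = 0
    · have hc₀ : c₀ ≠ 0 := fun h0 => hne ⟨h0, hc⟩
      rw [hc, zero_smul, add_zero] at h1
      exact (smul_eq_zero.mp h1).resolve_left hc₀
    · refine h (-(c₁⁻¹ * c₀)) v ?_ ((mul_eq_zero.mp h2).resolve_left hc)
      have h3 : c₁ • (Af *ᵥ v) = -(c₀ • v) := eq_neg_of_add_eq_zero_left (by rw [add_comm]; exact h1)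
      calc Af *ᵥ v = c₁⁻¹ • (c₁ • (Af *ᵥ v)) := by
            rw [smul_smul, inv_mul_cancel₀ hc, one_smul]
        _ = -(c₁⁻¹ * c₀) • v := by
            rw [h3, smul_neg, smul_smul, neg_smul]

end Pencil2
end Stmt5Aux

namespace Stmt5Aux
section Pencil3
variable {F : Type*} [Field F] {k : ℕ}

lemma mulVec_eq_sum_cols (M : Matrix (Fin (k+1)) (Fin k) F) (g : Fin k → F) :
    M *ᵥ g = ∑ j : Fin k, g j • Mᵀ j := by
  funext i
  simp [Matrix.mulVec, dotProduct, Finset.sum_apply, mul_comm]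

lemma colind_of_cond {S₀ S₁ : Matrix (Fin (k+1)) (Fin k) F} (h : Cond S₀ S₁) :
    LinearIndependent F (fun j : Fin k => S₀ᵀ j) := by
  have h0 := h 1 0 (by simp)
  rw [one_smul, zero_smul, add_zero, rank_eq_iff_injective] at h0
  rw [Fintype.linearIndependent_iff]
  intro g hg
  have hS : S₀ *ᵥ g = 0 := by rw [mulVec_eq_sum_cols]; exact hg
  have hmap : (S₀.map (algebraMap F (AlgebraicClosure F))) *ᵥ
      (fun j => algebraMap F (AlgebraicClosure F) (g j)) = 0 := by
    funext i
    have hSi := congrFun hS i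
    simp only [Matrix.mulVec, dotProduct, Pi.zero_apply] at hSi ⊢
    simp only [Matrix.map_apply, ← _root_.map_mul, ← map_sum, hSi, map_zero]
  have hinj := (injective_iff_map_eq_zero
    (S₀.map (algebraMap F (AlgebraicClosure F))).mulVecLin).mp h0
  have hg0 := hinj (fun j => algebraMap F (AlgebraicClosure F) (g j))
    (by simpa [Matrix.mulVecLin_apply] using hmap)
  intro j
  exact (algebraMap F (AlgebraicClosure F)).injective (by simpa using congrFun hg0 j)

lemma exists_N {S₀ : Matrix (Fin (k+1)) (Fin k) F}
    (h : LinearIndependent F (fun j : Fin k => S₀ᵀ j)) :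
    ∃ N : Matrix (Fin (k+1)) (Fin (k+1)) F, IsUnit N.det ∧ S₀ = N * E0 F k := by
  have hspan : Submodule.span F (Set.range fun j : Fin k => S₀ᵀ j) ≠ ⊤ := by
    intro htop
    have hc := finrank_span_eq_card h
    rw [htop, finrank_top, Module.finrank_fintype_fun_eq_card] at hc
    simp at hc
  obtain ⟨w, hw⟩ : ∃ w, w ∉ Submodule.span F (Set.range fun j : Fin k => S₀ᵀ j) := by
    by_contra hc
    push_neg at hc
    exact hspan (Submodule.eq_top_iff'.mpr hc)
  have hLI : LinearIndependent F (Fin.snoc (fun j : Fin k => S₀ᵀ j) w : Fin (k+1) → _) :=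
    linearIndependent_fin_snoc.mpr ⟨h, hw⟩
  refine ⟨(Matrix.of (Fin.snoc (fun j : Fin k => S₀ᵀ j) w))ᵀ, ?_, ?_⟩
  · rw [← Matrix.isUnit_iff_isUnit_det, ← Matrix.linearIndependent_cols_iff_isUnit]
    simpa [Matrix.transpose_transpose] using hLI
  · funext i j
    rw [Matrix.mul_apply, Fin.sum_univ_castSucc]
    simp [E0, Fin.snoc_castSucc, Fin.snoc_last, Matrix.one_apply, mul_ite,
      Finset.sum_ite_eq', Fin.snoc]

end Pencil3
end Stmt5Aux

namespace Stmt5Aux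
section Obs
variable {F : Type*} [Field F]

lemma of_row {n m : ℕ} (g : Fin n → Fin m → F) (i : Fin n) : (Matrix.of g) i = g i := rfl

lemma obsMat_row {k : ℕ} (A : Matrix (Fin k) (Fin k) F) (b : Fin k → F) (i : Fin k) :
    obsMat A b i = b ᵥ* A ^ (i : ℕ) := rfl

lemma obs_key {k : ℕ} (O A : Matrix (Fin (k+1)) (Fin (k+1)) F) (c : Fin (k+1) → F)
    (hOA : O * A = Matrix.of (Fin.snoc (fun i : Fin k => O i.succ) c)) :
    ∀ i : Fin (k+1), (O 0) ᵥ* A ^ (i : ℕ) = O i := by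
  intro i
  induction i using Fin.induction with
  | zero => rw [Fin.val_zero, pow_zero, Matrix.vecMul_one]
  | succ i ih =>
    have hv : ((i.succ : Fin (k+1)) : ℕ) = ((i.castSucc : Fin (k+1)) : ℕ) + 1 := by simp
    rw [hv, pow_succ, ← Matrix.vecMul_vecMul, ih, ← row_mul, hOA]
    rw [of_row, Fin.snoc_castSucc]

lemma obs_key_last {k : ℕ} (O A : Matrix (Fin (k+1)) (Fin (k+1)) F) (c : Fin (k+1) → F)
    (hOA : O * A = Matrix.of (Fin.snoc (fun i : Fin k => O i.succ) c)) :
    (O 0) ᵥ* A ^ (k+1) = c := by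
  have hlast := obs_key O A c hOA (Fin.last k)
  rw [Fin.val_last] at hlast
  rw [pow_succ, ← Matrix.vecMul_vecMul, hlast, ← row_mul, hOA]
  rw [of_row, Fin.snoc_last]

noncomputable def obsEquiv (k : ℕ) :
    {Ab : Matrix (Fin (k+1)) (Fin (k+1)) F × (Fin (k+1) → F) // IsUnit (obsMat Ab.1 Ab.2)} ≃
      {O : Matrix (Fin (k+1)) (Fin (k+1)) F // IsUnit O} × (Fin (k+1) → F) where
  toFun x := (⟨obsMat x.1.1 x.1.2, x.2⟩, x.1.2 ᵥ* x.1.1 ^ (k+1))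
  invFun y :=
    ⟨(y.1.1⁻¹ * Matrix.of (Fin.snoc (fun i : Fin k => y.1.1 i.succ) y.2), y.1.1 0), by
      have hdet : IsUnit y.1.1.det := (Matrix.isUnit_iff_isUnit_det _).mp y.1.2
      have hOA : y.1.1 * (y.1.1⁻¹ * Matrix.of (Fin.snoc (fun i : Fin k => y.1.1 i.succ) y.2)) =
          Matrix.of (Fin.snoc (fun i : Fin k => y.1.1 i.succ) y.2) :=
        Matrix.mul_nonsing_inv_cancel_left _ _ hdet
      have hrows := obs_key _ _ _ hOA
      have hobs : obsMat (y.1.1⁻¹ * Matrix.of (Fin.snoc (fun i : Fin k => y.1.1 i.succ) y.2))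
          (y.1.1 0) = y.1.1 := by
        funext i j
        rw [obsMat_row, hrows i]
      rw [hobs]
      exact y.1.2⟩
  left_inv := by
    rintro ⟨⟨A, b⟩, hU⟩
    have hdet : IsUnit (obsMat A b).det := (Matrix.isUnit_iff_isUnit_det _).mp hU
    have hb : obsMat A b 0 = b := by
      rw [obsMat_row]
      norm_num
    have hOA : obsMat A b * A =
        Matrix.of (Fin.snoc (fun i : Fin k => obsMat A b i.succ) (b ᵥ* A ^ (k+1))) := by
      funext i
      refine Fin.lastCases ?_ (fun i => ?_) i
      · rw [row_mul _ _ (Fin.last k)]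
        rw [of_row, obsMat_row, Fin.val_last, Matrix.vecMul_vecMul, ← pow_succ, Fin.snoc_last]
      · rw [row_mul]
        rw [of_row, obsMat_row, Fin.coe_castSucc, Matrix.vecMul_vecMul, ← pow_succ,
          Fin.snoc_castSucc, obsMat_row, Fin.val_succ]
    refine Subtype.ext (Prod.ext ?_ ?_)
    · show (obsMat A b)⁻¹ * Matrix.of (Fin.snoc (fun i : Fin k => obsMat A b i.succ)
        (b ᵥ* A ^ (k+1))) = A
      rw [← hOA, Matrix.nonsing_inv_mul_cancel_left _ _ hdet]
    · exact hb
  right_inv := by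
    rintro ⟨⟨O, hO⟩, c⟩
    have hdet : IsUnit O.det := (Matrix.isUnit_iff_isUnit_det _).mp hO
    have hOA : O * (O⁻¹ * Matrix.of (Fin.snoc (fun i : Fin k => O i.succ) c)) =
        Matrix.of (Fin.snoc (fun i : Fin k => O i.succ) c) :=
      Matrix.mul_nonsing_inv_cancel_left _ _ hdet
    have hrows := obs_key _ _ _ hOA
    have hobs : obsMat (O⁻¹ * Matrix.of (Fin.snoc (fun i : Fin k => O i.succ) c)) (O 0) = O := by
      funext i j
      rw [obsMat_row, hrows i]
    refine Prod.ext (Subtype.ext ?_) ?_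
    · exact hobs
    · exact obs_key_last _ _ _ hOA

end Obs
end Stmt5Aux

namespace Stmt5Aux
section Count
variable {F : Type*} [Field F] [Fintype F]

lemma card_obs (k : ℕ) :
    Nat.card {Ab : Matrix (Fin k) (Fin k) F × (Fin k → F) // IsUnit (obsMat Ab.1 Ab.2)} =
      Nat.card {O : Matrix (Fin k) (Fin k) F // IsUnit O} * Fintype.card F ^ k := by
  cases k with
  | zero =>
    have h1 : ∀ M : Matrix (Fin 0) (Fin 0) F, IsUnit M := fun M =>
      (Matrix.isUnit_iff_isUnit_det M).mpr (by simp [Matrix.det_fin_zero])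
    rw [Nat.card_congr (Equiv.subtypeUnivEquiv fun Ab => h1 _),
      Nat.card_congr (Equiv.subtypeUnivEquiv h1), Nat.card_eq_fintype_card,
      Nat.card_eq_fintype_card]
    simp
  | succ k =>
    rw [Nat.card_congr (obsEquiv k), Nat.card_prod, Nat.card_eq_fintype_card (α := Fin (k+1) → F),
      Fintype.card_fun, Fintype.card_fin]

noncomputable def fixEquiv (k : ℕ) :
    {T : Matrix (Fin (k+1)) (Fin k) F // Cond (E0 F k) T} ≃
      {Ab : Matrix (Fin k) (Fin k) F × (Fin k → F) // IsUnit (obsMat Ab.1 Ab.2)} where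
  toFun T := ⟨(Matrix.of fun i j => T.1 i.castSucc j, T.1 (Fin.last k)), by
    rw [← cond_E0_iff, snoc_eta]
    exact T.2⟩
  invFun Ab := ⟨Matrix.of (Fin.snoc Ab.1.1 Ab.1.2), (cond_E0_iff _ _).mpr Ab.2⟩
  left_inv T := Subtype.ext (snoc_eta T.1)
  right_inv Ab := by
    refine Subtype.ext (Prod.ext ?_ ?_)
    · funext i j
      show Matrix.of (Fin.snoc Ab.1.1 Ab.1.2) i.castSucc j = _
      rw [of_row]; erw [Fin.snoc_castSucc]
    · show Matrix.of (Fin.snoc Ab.1.1 Ab.1.2) (Fin.last k) = _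
      rw [of_row]; erw [Fin.snoc_last]

noncomputable def fibEquiv {k : ℕ} (S₀ : Matrix (Fin (k+1)) (Fin k) F)
    (h : LinearIndependent F (fun j : Fin k => S₀ᵀ j)) :
    {S₁ : Matrix (Fin (k+1)) (Fin k) F // Cond S₀ S₁} ≃
      {T : Matrix (Fin (k+1)) (Fin k) F // Cond (E0 F k) T} := by
  have hN := exists_N h
  set N := hN.choose with hNdef
  obtain ⟨hNu, hNS⟩ := hN.choose_spec
  exact {
    toFun := fun S₁ => ⟨N⁻¹ * S₁.1, by
      have h2 : Cond (N * E0 F k) (N * (N⁻¹ * S₁.1)) := by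
        rw [Matrix.mul_nonsing_inv_cancel_left _ _ hNu, ← hNS]
        exact S₁.2
      exact (cond_mul_left N hNu _ _).mp h2⟩
    invFun := fun T => ⟨N * T.1, by
      rw [hNS]
      exact (cond_mul_left N hNu _ _).mpr T.2⟩
    left_inv := fun S₁ => Subtype.ext (Matrix.mul_nonsing_inv_cancel_left _ _ hNu)
    right_inv := fun T => Subtype.ext (Matrix.nonsing_inv_mul_cancel_left _ _ hNu) }

noncomputable def unitsEquiv (M : Type*) [Monoid M] : Mˣ ≃ {x : M // IsUnit x} where
  toFun u := ⟨u, u.isUnit⟩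
  invFun x := x.2.unit
  left_inv u := Units.ext u.isUnit.unit_spec
  right_inv x := Subtype.ext x.2.unit_spec

noncomputable def transposeEquivLI (k : ℕ) :
    {S₀ : Matrix (Fin (k+1)) (Fin k) F // LinearIndependent F (fun j : Fin k => S₀ᵀ j)} ≃
      {s : Fin k → (Fin (k+1) → F) // LinearIndependent F s} where
  toFun S := ⟨fun j => S.1ᵀ j, S.2⟩
  invFun s := ⟨(Matrix.of s.1)ᵀ, by
    have : ∀ j, ((Matrix.of s.1)ᵀ)ᵀ j = s.1 j := fun j => rfl
    simpa [this] using s.2⟩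
  left_inv S := Subtype.ext (by funext i j; rfl)
  right_inv s := Subtype.ext (by funext j i; rfl)

end Count
end Stmt5Aux

namespace Stmt5Aux

lemma qgeom (q : ℕ) (hq : 1 ≤ q) (d : ℕ) : (q - 1) * qInt q d + 1 = q ^ d := by
  induction d with
  | zero => simp [qInt]
  | succ d ih =>
    have hstep : qInt q (d+1) = qInt q d + q ^ d := Finset.sum_range_succ _ _
    rw [hstep, Nat.mul_add]
    have h2 : (q - 1) * q ^ d + q ^ d = q ^ (d+1) := by
      have h3 : (q - 1) * q ^ d + q ^ d = ((q - 1) + 1) * q ^ d := by ring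
      rw [h3, Nat.sub_add_cancel hq, pow_succ, mul_comm]
    calc (q-1) * qInt q d + (q-1) * q ^ d + 1
        = ((q-1) * qInt q d + 1) + (q-1) * q ^ d := by ring
      _ = q ^ d + (q-1) * q ^ d := by rw [ih]
      _ = q ^ (d+1) := by rw [add_comm]; exact h2

lemma pow_sub_pow' (q : ℕ) (hq : 1 ≤ q) {i m : ℕ} (h : i ≤ m) :
    q ^ m - q ^ i = q ^ i * ((q - 1) * qInt q (m - i)) := by
  have hg := qgeom q hq (m - i)
  have hm : q ^ m = q ^ i * ((q - 1) * qInt q (m - i)) + q ^ i := by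
    calc q ^ m = q ^ i * q ^ (m - i) := by rw [← pow_add, Nat.add_sub_cancel' h]
      _ = q ^ i * ((q - 1) * qInt q (m - i) + 1) := by rw [hg]
      _ = q ^ i * ((q - 1) * qInt q (m - i)) + q ^ i := by ring
  omega

lemma prodA (q : ℕ) (hq : 1 ≤ q) (k : ℕ) : ∏ i ∈ range k, (q ^ (k+1) - q ^ i)
    = (∏ i ∈ range k, q ^ i) * ((q - 1) ^ k * qFact q (k+1)) := by
  have h1 : ∀ i ∈ range k, q ^ (k+1) - q ^ i = q ^ i * ((q - 1) * qInt q (k+1-i)) := fun i hi =>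
    pow_sub_pow' q hq (le_trans (le_of_lt (Finset.mem_range.mp hi)) (Nat.le_succ k))
  rw [Finset.prod_congr rfl h1, Finset.prod_mul_distrib, Finset.prod_mul_distrib,
    Finset.prod_const, Finset.card_range]
  congr 1
  congr 1
  have hrefl := Finset.prod_range_reflect (fun j => qInt q (j+2)) k
  have h2 : ∏ i ∈ range k, qInt q (k+1-i) = ∏ j ∈ range k, qInt q (j+2) := by
    rw [← hrefl]
    exact Finset.prod_congr rfl fun j hj => by
      have := Finset.mem_range.mp hj
      congr 1
      omega
  rw [h2, qFact, Finset.prod_range_succ']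
  simp [qInt]

lemma prodB (q : ℕ) (hq : 1 ≤ q) (k : ℕ) : ∏ i ∈ range k, (q ^ k - q ^ i)
    = (∏ i ∈ range k, q ^ i) * ((q - 1) ^ k * qFact q k) := by
  have h1 : ∀ i ∈ range k, q ^ k - q ^ i = q ^ i * ((q - 1) * qInt q (k-i)) := fun i hi =>
    pow_sub_pow' q hq (le_of_lt (Finset.mem_range.mp hi))
  rw [Finset.prod_congr rfl h1, Finset.prod_mul_distrib, Finset.prod_mul_distrib,
    Finset.prod_const, Finset.card_range]
  congr 1
  congr 1
  have hrefl := Finset.prod_range_reflect (fun j => qInt q (j+1)) k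
  have h2 : ∏ i ∈ range k, qInt q (k-i) = ∏ j ∈ range k, qInt q (j+1) := by
    rw [← hrefl]
    exact Finset.prod_congr rfl fun j hj => by
      have := Finset.mem_range.mp hj
      congr 1
      omega
  rw [h2, qFact]

lemma numeric (q k : ℕ) (hq : 1 ≤ q) :
    (∏ i ∈ range k, (q ^ (k+1) - q ^ i)) * ((∏ i ∈ range k, (q ^ k - q ^ i)) * q ^ k) =
      q ^ (k ^ 2) * (q - 1) ^ (2 * k) * qFact q k * qFact q (k + 1) := by
  rw [prodA q hq k, prodB q hq k, Finset.prod_pow_eq_pow_sum]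
  have hs : (∑ i ∈ range k, i) * 2 = k * (k - 1) := Finset.sum_range_id_mul_two k
  have hkk : k * (k - 1) + k = k ^ 2 := by
    cases k with
    | zero => rfl
    | succ n => simp [Nat.succ_sub_one]; ring
  have hexp : (∑ i ∈ range k, i) + ((∑ i ∈ range k, i) + k) = k ^ 2 := by linarith
  calc (q ^ (∑ i ∈ range k, i) * ((q-1) ^ k * qFact q (k+1))) *
        ((q ^ (∑ i ∈ range k, i) * ((q-1) ^ k * qFact q k)) * q ^ k)
      = q ^ ((∑ i ∈ range k, i) + ((∑ i ∈ range k, i) + k)) *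
        ((q-1) ^ (k+k) * (qFact q k * qFact q (k+1))) := by
        rw [pow_add, pow_add, pow_add]; ring
    _ = q ^ (k ^ 2) * (q-1) ^ (2*k) * qFact q k * qFact q (k+1) := by
        rw [hexp, two_mul]; ring

end Stmt5Aux


open Stmt5Aux in
set_option maxHeartbeats 1000000 in
/-- The number of nondegenerate `2 × k × (k+1)` hypermatrices over the finite field
`F_q` equals `q^{k²} (q-1)^{2k} [k]!_q [k+1]!_q`. -/
theorem stmt5 {F : Type*} [Field F] [Fintype F] (k : ℕ) :
    Nat.card {S : Matrix (Fin (k+1)) (Fin k) F × Matrix (Fin (k+1)) (Fin k) F //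
        ∀ c₀ c₁ : AlgebraicClosure F, ¬ (c₀ = 0 ∧ c₁ = 0) →
          (c₀ • S.1.map (algebraMap F (AlgebraicClosure F)) +
           c₁ • S.2.map (algebraMap F (AlgebraicClosure F))).rank = k} =
      (Fintype.card F) ^ (k ^ 2) * (Fintype.card F - 1) ^ (2 * k) *
        qFact (Fintype.card F) k * qFact (Fintype.card F) (k + 1) := by
  classical
  have hq : 1 ≤ Fintype.card F := Fintype.card_pos
  show Nat.card {S : Matrix (Fin (k+1)) (Fin k) F × Matrix (Fin (k+1)) (Fin k) F //
      Cond S.1 S.2} = _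
  have e1 : {S : Matrix (Fin (k+1)) (Fin k) F × Matrix (Fin (k+1)) (Fin k) F //
        Cond S.1 S.2} ≃
      (Σ _s₀ : {S₀ : Matrix (Fin (k+1)) (Fin k) F //
          LinearIndependent F (fun j : Fin k => S₀ᵀ j)},
        {T : Matrix (Fin (k+1)) (Fin k) F // Cond (E0 F k) T}) := by
    refine Equiv.trans ?_ (Equiv.sigmaCongrRight (fun s₀ => fibEquiv s₀.1 s₀.2))
    exact {
      toFun := fun S => ⟨⟨S.1.1, colind_of_cond S.2⟩, ⟨S.1.2, S.2⟩⟩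
      invFun := fun x => ⟨(x.1.1, x.2.1), x.2.2⟩
      left_inv := fun S => rfl
      right_inv := fun x => rfl }
  have e := e1.trans (Equiv.sigmaEquivProd
    {S₀ : Matrix (Fin (k+1)) (Fin k) F // LinearIndependent F (fun j : Fin k => S₀ᵀ j)}
    {T : Matrix (Fin (k+1)) (Fin k) F // Cond (E0 F k) T})
  rw [Nat.card_congr e, Nat.card_prod, Nat.card_congr (transposeEquivLI k),
    Nat.card_congr (fixEquiv k), card_obs k,
    Nat.card_congr (unitsEquiv (Matrix (Fin k) (Fin k) F)).symm]
  rw [card_linearIndependent (K := F) (V := Fin (k+1) → F)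
    (by rw [Module.finrank_fintype_fun_eq_card, Fintype.card_fin]; omega)]
  rw [show Nat.card (Matrix (Fin k) (Fin k) F)ˣ =
      ∏ i : Fin k, (Fintype.card F ^ k - Fintype.card F ^ (i : ℕ)) from
    Matrix.card_GL_field k]
  rw [Module.finrank_fintype_fun_eq_card, Fintype.card_fin]
  rw [← Finset.prod_range (fun i => Fintype.card F ^ (k+1) - Fintype.card F ^ i),
    ← Finset.prod_range (fun i => Fintype.card F ^ k - Fintype.card F ^ i)]
  exact numeric (Fintype.card F) k hq
end
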